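/- Let d ≥ 1 and let α₁,…,αₙ be elements of the dual space (ℝ^d)^*. Fix 2 ≤ k ≤ d. Then the following are equivalent: (1) for every linear subspace V ⊆ ℝ^d of codimension k−1, at most k−1 of the functionals αᵢ vanish identically on V; (2) every k of the functionals α₁,…,αₙ (with distinct indices) are linearly independent. -/

import Mathlib

open Module Submodule

/-- Any submodule of a finite-dimensional vector space can be enlarged by any
number of dimensions that still fits in the ambient space. -/
lemma aux_exists_supermodule {K V : Type*} [Field K] [AddCommGroup V] [Module K V]
    [FiniteDimensional K V] :
    ∀ (j : ℕ) (W : Submodule K V), finrank K W + j ≤ finrank K V →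
      ∃ W' : Submodule K V, W ≤ W' ∧ finrank K W' = finrank K W + j := by
  intro j
  induction j with
  | zero => exact fun W _ => ⟨W, le_rfl, by simp⟩
  | succ j ih =>
    intro W hW
    have hlt : finrank K W < finrank K V := by omega
    obtain ⟨x, hx⟩ := W.exists_of_finrank_lt hlt
    have hxW : x ∉ W := by simpa using hx 1 one_ne_zero
    have hx0 : x ≠ 0 := fun h => hxW (h ▸ W.zero_mem)
    have hinf : W ⊓ (K ∙ x) = ⊥ := by
      rw [eq_bot_iff]
      rintro y ⟨hyW, hyx⟩
      obtain ⟨r, rfl⟩ := Submodule.mem_span_singleton.mp hyx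
      rcases eq_or_ne r 0 with rfl | hr
      · simp
      · exact absurd hyW (hx r hr)
    have hsum := Submodule.finrank_sup_add_finrank_inf_eq W (K ∙ x)
    rw [hinf] at hsum
    have hrk2 : finrank K ↥(W ⊔ (K ∙ x)) = finrank K W + 1 := by
      have h1 : finrank K (K ∙ x) = 1 := finrank_span_singleton hx0
      have h0 : finrank K (⊥ : Submodule K V) = 0 := finrank_bot K V
      omega
    obtain ⟨W', hle, hr⟩ := ih (W ⊔ (K ∙ x)) (by omega)
    exact ⟨W', le_trans le_sup_left hle, by omega⟩

/-- The fixed-point-dimension condition is equivalent to the GKM_k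
weight condition: for functionals α₁,…,αₙ on ℝ^d and 2 ≤ k ≤ d, every codimension-(k−1)
subspace annihilates at most k−1 of the αᵢ iff any k of the αᵢ are linearly independent. -/
theorem stmt_0 (d n k : ℕ) (hd : 1 ≤ d) (hk : 2 ≤ k) (hkd : k ≤ d)
    (α : Fin n → Module.Dual ℝ (Fin d → ℝ)) :
    (∀ V : Submodule ℝ (Fin d → ℝ), Module.finrank ℝ V = d - (k - 1) →
      ({i : Fin n | ∀ v ∈ V, α i v = 0}).ncard ≤ k - 1)
    ↔ (∀ s : Finset (Fin n), s.card = k →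
        LinearIndependent ℝ (fun i : s => α i)) := by
  have hdim : finrank ℝ (Fin d → ℝ) = d := Module.finrank_fin_fun ℝ
  have hdualdim : finrank ℝ (Module.Dual ℝ (Fin d → ℝ)) = d := by
    rw [Subspace.dual_finrank_eq, hdim]
  constructor
  · -- fixed-point condition ⇒ independence
    intro hV s hs
    by_contra hdep
    have hcard : Fintype.card s = k := by simp [hs]
    -- the span of the α i, i ∈ s, has dimension < k
    have hrange : Set.range (fun i : s => α i) = α '' ↑s := (Set.image_eq_range α ↑s).symm
    have hle : (Set.range (fun i : s => α i)).finrank ℝ ≤ k := by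
      have := finrank_range_le_card (R := ℝ) (fun i : s => α i)
      rwa [hcard] at this
    have hne : (Set.range (fun i : s => α i)).finrank ℝ ≠ k := by
      intro h
      exact hdep (linearIndependent_iff_card_eq_finrank_span.mpr (by rw [hcard, h]))
    have hlt' : finrank ℝ (span ℝ (Set.range (fun i : s => α i))) < k := by
      rw [← Set.finrank]
      exact lt_of_le_of_ne hle hne
    -- enlarge the span to dimension k - 1
    obtain ⟨W, hW0W, hWrk⟩ := aux_exists_supermodule
      (k - 1 - finrank ℝ (span ℝ (Set.range (fun i : s => α i))))
      (span ℝ (Set.range (fun i : s => α i)))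
      (by rw [hdualdim]; omega)
    have hWrk' : finrank ℝ W = k - 1 := by omega
    -- its coannihilator has the right dimension
    set V : Submodule ℝ (Fin d → ℝ) := W.dualCoannihilator with hVdef
    have hVrk : finrank ℝ V = d - (k - 1) := by
      have := Subspace.finrank_add_finrank_dualCoannihilator_eq W
      rw [hdim, hWrk', ← hVdef] at this
      omega
    have hkey := hV V hVrk
    -- but s is contained in the vanishing set
    have hsub : (↑s : Set (Fin n)) ⊆ {i : Fin n | ∀ v ∈ V, α i v = 0} := by
      intro i hi v hv
      have hαi : α i ∈ W := hW0W (subset_span ⟨⟨i, hi⟩, rfl⟩)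
      exact (Submodule.mem_dualCoannihilator v).mp hv _ hαi
    have hfin : ({i : Fin n | ∀ v ∈ V, α i v = 0}).Finite := Set.toFinite _
    have hle2 : (↑s : Set (Fin n)).ncard ≤ ({i : Fin n | ∀ v ∈ V, α i v = 0}).ncard :=
      Set.ncard_le_ncard hsub hfin
    rw [Set.ncard_coe_finset, hs] at hle2
    omega
  · -- independence ⇒ fixed-point condition
    intro hLI V hVrk
    by_contra hlt
    set S : Set (Fin n) := {i : Fin n | ∀ v ∈ V, α i v = 0} with hS
    have hk' : k ≤ S.ncard := by omega
    have hfin : S.Finite := Set.toFinite _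
    rw [Set.ncard_eq_toFinset_card S hfin] at hk'
    obtain ⟨t, htsub, htcard⟩ := Finset.exists_subset_card_eq hk'
    have hli := hLI t htcard
    have hcard : Fintype.card t = k := by simp [htcard]
    -- all α i, i ∈ t, lie in the dual annihilator of V
    have hmem : ∀ i : t, α i ∈ V.dualAnnihilator := by
      rintro ⟨i, hi⟩
      rw [Submodule.mem_dualAnnihilator]
      have : i ∈ S := by simpa using htsub hi
      exact this
    have hspan : span ℝ (Set.range (fun i : t => α i)) ≤ V.dualAnnihilator := by
      rw [span_le]
      rintro _ ⟨i, rfl⟩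
      exact hmem i
    have h1 : finrank ℝ (span ℝ (Set.range (fun i : t => α i))) = k := by
      have := linearIndependent_iff_card_eq_finrank_span.mp hli
      rw [hcard] at this
      exact this.symm
    have h2 : finrank ℝ V.dualAnnihilator = k - 1 := by
      have hq := LinearEquiv.finrank_eq (R := ℝ) (M := (Fin d → ℝ) ⧸ V)
        (N := V.dualAnnihilator) (Subspace.quotEquivAnnihilator V)
      have hq2 := Submodule.finrank_quotient_add_finrank V
      rw [hdim, hVrk] at hq2
      omega
    have := Submodule.finrank_mono hspan
    rw [h1, h2] at this
    omega
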